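/- If X is a reduced two-rowed array, then the reduced signatures of X and of F(X) coincide: σ̄(F(X)) = σ̄(X). -/

import Mathlib

/-- A two-rowed array: a pair of sequences of non-negative integers indexed by `ℤ`
(the `x`-row and the `y`-row). -/
abbrev TwoRow : Type := (ℤ → ℕ) × (ℤ → ℕ)

/-- A two-rowed array has finite support and vanishes for all `k ≤ -2`. -/
def TwoRow.Supported (X : TwoRow) : Prop :=
  (∀ k : ℤ, k ≤ -2 → X.1 k = 0 ∧ X.2 k = 0) ∧
    ∃ N : ℤ, ∀ k : ℤ, N ≤ k → X.1 k = 0 ∧ X.2 k = 0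

/-- `q(z) = ⌊z/2⌋` -/
def qH (z : ℕ) : ℕ := z / 2

/-- `r(z) = z - 2⌊z/2⌋` -/
def rH (z : ℕ) : ℕ := z % 2

/-- `z_k = min{x_k, r(y_k) + 2q(y_{k-1})}` -/
def zS (X : TwoRow) (k : ℤ) : ℕ := min (X.1 k) (rH (X.2 k) + 2 * qH (X.2 (k - 1)))

/-- `X_k = x_k - z_k + z_{k-1}` -/
def XS (X : TwoRow) (k : ℤ) : ℕ := X.1 k - zS X k + zS X (k - 1)

/-- The operation `F`, given by `X̃_k = r(X_k) + 2q(X_{k-1})` and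
`Ỹ_k = r(y_k) + 2q(y_{k-1}) - z_k + z_{k-1}`. -/
def Fop (X : TwoRow) : TwoRow :=
  (fun k => rH (XS X k) + 2 * qH (XS X (k - 1)),
   fun k => rH (X.2 k) + 2 * qH (X.2 (k - 1)) - zS X k + zS X (k - 1))

/-- `𝗫_k(a)`: the two-rowed array whose only non-zero entries are `x_{k+1} = a` and `y_k = a`. -/
def XkArr (k : ℤ) (a : ℕ) : TwoRow :=
  (fun j => if j = k + 1 then a else 0, fun j => if j = k then a else 0)

/-- `X` is reduced if `min{x_{k+1}, y_k} ≤ 1` for every `k`. -/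
def TwoRow.Reduced (X : TwoRow) : Prop := ∀ k : ℤ, min (X.1 (k + 1)) (X.2 k) ≤ 1
open scoped Classical

/-- The annotated signature of `X` read from column `N` down to column `-1`:
`true` stands for a `+` (coming from the block `+^{x_k}`) and `false` for a `−`
(coming from `−^{y_k}`); within each column the `−`'s precede the `+`'s, and
columns are listed with `k` decreasing from left to right. -/
def sigFrom (X : TwoRow) (N : ℤ) : List (Bool × ℤ) :=
  ((List.range (N + 2).toNat).map fun t =>
      List.replicate (X.2 (N - (t : ℤ))) ((false, N - (t : ℤ)) : Bool × ℤ) ++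
        List.replicate (X.1 (N - (t : ℤ))) ((true, N - (t : ℤ)) : Bool × ℤ)).flatten

/-- The signature of a (finitely supported) two-rowed array. -/
noncomputable def sigOf (X : TwoRow) : List (Bool × ℤ) :=
  sigFrom X (if h : ∃ N : ℤ, ∀ k : ℤ, N ≤ k → X.1 k = 0 ∧ X.2 k = 0 then h.choose else 0)

/-- One step of the cancellation of pairs `(+,−)` (a `+` standing to the left of a `−`,
with everything in between already removed), implemented with a stack. -/
def redStep {α : Type} (st : List (Bool × α)) (c : Bool × α) : List (Bool × α) :=
  match c.1, st with
  | false, (true, _) :: st' => st'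
  | _, _ => c :: st

/-- The reduced form of a signature. -/
def reduceSig {α : Type} (l : List (Bool × α)) : List (Bool × α) := (l.foldl redStep []).reverse

/-- The reduced signature `σ̄(X)` (annotated by the column index each symbol comes from). -/
noncomputable def redSig (X : TwoRow) : List (Bool × ℤ) := reduceSig (sigOf X)

/-- The operator `f̃`: if the reduced signature contains no `+`, the result is `0` (`none`);
otherwise, if the leftmost remaining `+` comes from the block `+^{x_k}`, the result is
`X - x_k(1) + y_k(1)`. -/
noncomputable def ftilde (X : TwoRow) : Option TwoRow :=
  match (redSig X).find? (fun c => c.1) with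
  | none => none
  | some c =>
      some (fun j => if j = c.2 then X.1 j - 1 else X.1 j,
            fun j => if j = c.2 then X.2 j + 1 else X.2 j)


namespace S12

/-! ### The stack reduction as a numeric fold -/

def stepN (p : ℕ × ℕ) (c : Bool) : ℕ × ℕ :=
  match c with
  | true => (p.1, p.2 + 1)
  | false =>
    match p.2 with
    | 0 => (p.1 + 1, 0)
    | b + 1 => (p.1, b)

def redStepB (st : List Bool) (c : Bool) : List Bool :=
  match c, st with
  | false, true :: st' => st'
  | _, _ => c :: st

lemma mapfst_redStep (st : List (Bool × ℤ)) (c : Bool × ℤ) :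
    (redStep st c).map Prod.fst = redStepB (st.map Prod.fst) c.1 := by
  rcases c with ⟨b, i⟩
  match b, st with
  | true, [] => rfl
  | true, (true, j) :: t => rfl
  | true, (false, j) :: t => rfl
  | false, [] => rfl
  | false, (true, j) :: t => rfl
  | false, (false, j) :: t => rfl

lemma foldl_mapfst (l : List (Bool × ℤ)) : ∀ st : List (Bool × ℤ),
    (l.foldl redStep st).map Prod.fst = (l.map Prod.fst).foldl redStepB (st.map Prod.fst) := by
  induction l with
  | nil => intro st; rfl
  | cons c l ih =>
    intro st
    simp only [List.foldl_cons, List.map_cons, ih, mapfst_redStep]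

lemma redStepB_true (st : List Bool) : redStepB st true = true :: st := by
  cases st with
  | nil => rfl
  | cons h t => cases h <;> rfl

lemma redStepB_false_push (a : ℕ) :
    redStepB (List.replicate a false) false = List.replicate (a + 1) false := by
  cases a <;> rfl

lemma foldl_redStepB (w : List Bool) : ∀ a b : ℕ,
    w.foldl redStepB (List.replicate b true ++ List.replicate a false) =
      List.replicate (w.foldl stepN (a, b)).2 true ++
        List.replicate (w.foldl stepN (a, b)).1 false := by
  induction w with
  | nil => intro a b; rfl
  | cons c w ih =>
    intro a b
    simp only [List.foldl_cons]
    cases c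
    · cases b with
      | zero =>
        rw [List.replicate_zero, List.nil_append, redStepB_false_push,
          show stepN (a, 0) false = (a + 1, 0) from rfl]
        have := ih (a + 1) 0
        rw [List.replicate_zero, List.nil_append] at this
        rw [← this]
      | succ b' =>
        rw [List.replicate_succ, List.cons_append,
          show ∀ L, redStepB (true :: L) false = L from fun _ => rfl,
          show stepN (a, b' + 1) false = (a, b') from rfl, ih]
    · rw [redStepB_true, show stepN (a, b) true = (a, b + 1) from rfl,
        ← List.cons_append, ← List.replicate_succ, ih]

lemma reduceSig_mapfst (l : List (Bool × ℤ)) :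
    (reduceSig l).map Prod.fst =
      List.replicate ((l.map Prod.fst).foldl stepN (0, 0)).1 false ++
        List.replicate ((l.map Prod.fst).foldl stepN (0, 0)).2 true := by
  unfold reduceSig
  rw [List.map_reverse, foldl_mapfst]
  have h0 : (([] : List (Bool × ℤ)).map Prod.fst) =
      List.replicate 0 true ++ List.replicate 0 false := rfl
  rw [h0, foldl_redStepB]
  simp [List.reverse_append]

/-! ### The signature word as a fold over column blocks -/

def blockStep (p : ℕ × ℕ) (c : ℕ × ℕ) : ℕ × ℕ := (p.1 + (c.1 - p.2), (p.2 - c.1) + c.2)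

lemma foldl_stepN_false (yk : ℕ) : ∀ p : ℕ × ℕ,
    (List.replicate yk false).foldl stepN p = (p.1 + (yk - p.2), p.2 - yk) := by
  induction yk with
  | zero => intro p; simp
  | succ y ih =>
    rintro ⟨a, b⟩
    rw [List.replicate_succ, List.foldl_cons]
    rcases b with _ | b
    · rw [show stepN (a, 0) false = (a + 1, 0) from rfl, ih]
      simp only [Prod.mk.injEq]
      omega
    · rw [show stepN (a, b + 1) false = (a, b) from rfl, ih]
      simp only [Prod.mk.injEq]
      omega

lemma foldl_stepN_true (xk : ℕ) : ∀ p : ℕ × ℕ,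
    (List.replicate xk true).foldl stepN p = (p.1, p.2 + xk) := by
  induction xk with
  | zero => intro p; simp
  | succ x ih =>
    rintro ⟨a, b⟩
    rw [List.replicate_succ, List.foldl_cons, show stepN (a, b) true = (a, b + 1) from rfl, ih]
    exact Prod.ext rfl (by show b + 1 + x = b + (x + 1); omega)

lemma foldl_block (p : ℕ × ℕ) (yk xk : ℕ) :
    (List.replicate yk false ++ List.replicate xk true).foldl stepN p = blockStep p (yk, xk) := by
  rw [List.foldl_append, foldl_stepN_false, foldl_stepN_true]
  rfl

def cols (x y : ℤ → ℕ) (N : ℤ) : List (ℕ × ℕ) :=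
  (List.range (N + 2).toNat).map fun t : ℕ => (y (N - (t : ℤ)), x (N - (t : ℤ)))

lemma sig_fold (X : TwoRow) (N : ℤ) :
    ((sigFrom X N).map Prod.fst).foldl stepN (0, 0) =
      (S12.cols X.1 X.2 N).foldl blockStep (0, 0) := by
  unfold sigFrom cols
  rw [List.map_flatten, List.foldl_flatten]
  simp only [bind_pure_comp, List.map_eq_map, List.map_map, List.foldl_map]
  apply List.foldl_ext
  intro p t _
  simp only [Function.comp_apply, List.map_append, List.map_replicate]
  exact foldl_block p _ _

/-! ### Tail sums and the walk `T` -/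

noncomputable def Asum (x y : ℤ → ℕ) (n m : ℤ) : ℤ := ∑ j ∈ Finset.Ico m (n + 1), ((x j : ℤ) - (y j : ℤ))

noncomputable def Tf (x y : ℤ → ℕ) (n m : ℤ) : ℤ := Asum x y n (m + 1) - (y m : ℤ)

lemma Asum_empty (x y : ℤ → ℕ) {n m : ℤ} (h : n + 1 ≤ m) : Asum x y n m = 0 := by
  unfold Asum
  rw [Finset.Ico_eq_empty (by omega), Finset.sum_empty]

lemma Asum_rec (x y : ℤ → ℕ) {n m : ℤ} (h : m ≤ n) :
    Asum x y n m = ((x m : ℤ) - (y m : ℤ)) + Asum x y n (m + 1) := by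
  unfold Asum
  rw [← Finset.Ico_union_Ico_eq_Ico (by omega : m ≤ m + 1) (by omega : m + 1 ≤ n + 1),
    Finset.sum_union (Finset.Ico_disjoint_Ico_consecutive m (m + 1) (n + 1)),
    show Finset.Ico m (m + 1) = {m} by ext j; simp [Finset.mem_Ico]; omega,
    Finset.sum_singleton]

lemma fold_aux (x y : ℤ → ℕ) (n : ℤ) : ∀ t : ℕ, (t : ℤ) ≤ n + 2 →
    ∃ μ : ℤ, μ ≤ 0 ∧ μ ≤ Asum x y n (n + 1 - (t : ℤ)) ∧
      (∀ m : ℤ, n + 1 - (t : ℤ) ≤ m → m ≤ n → μ ≤ Tf x y n m) ∧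
      (μ = 0 ∨ ∃ m : ℤ, n + 1 - (t : ℤ) ≤ m ∧ m ≤ n ∧ μ = Tf x y n m) ∧
      ((List.range t).map fun s : ℕ => (y (n - (s : ℤ)), x (n - (s : ℤ)))).foldl blockStep (0, 0) =
        ((-μ).toNat, (Asum x y n (n + 1 - (t : ℤ)) - μ).toNat) := by
  intro t
  induction t with
  | zero =>
    intro _
    refine ⟨0, le_refl _, ?_, ?_, Or.inl rfl, ?_⟩
    · rw [show (n + 1 - ((0 : ℕ) : ℤ)) = n + 1 by push_cast; ring, Asum_empty x y (by omega)]
    · intro m h1 h2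
      exfalso
      push_cast at h1
      omega
    · rw [show (n + 1 - ((0 : ℕ) : ℤ)) = n + 1 by push_cast; ring, Asum_empty x y (by omega)]
      rfl
  | succ t ih =>
    intro ht
    obtain ⟨μ, hμ0, hμA, hbd, hat, hfold⟩ := ih (by push_cast at ht ⊢; omega)
    have hkn : n - (t : ℤ) ≤ n := by omega
    have hidx : n + 1 - ((t : ℕ) : ℤ) = (n - (t : ℤ)) + 1 := by ring
    have hidx2 : n + 1 - (((t + 1 : ℕ)) : ℤ) = n - (t : ℤ) := by push_cast; ring
    rw [hidx] at hμA hfold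
    have hrec : Asum x y n (n - (t : ℤ)) =
        ((x (n - (t : ℤ)) : ℤ) - (y (n - (t : ℤ)) : ℤ)) + Asum x y n ((n - (t : ℤ)) + 1) :=
      Asum_rec x y hkn
    have hTdef : Tf x y n (n - (t : ℤ)) =
        Asum x y n ((n - (t : ℤ)) + 1) - (y (n - (t : ℤ)) : ℤ) := rfl
    refine ⟨min μ (Tf x y n (n - (t : ℤ))), by omega, ?_, ?_, ?_, ?_⟩
    · rw [hidx2]
      omega
    · intro m h1 h2
      rw [hidx2] at h1
      rcases eq_or_lt_of_le h1 with h | h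
      · rw [← h]
        exact min_le_right _ _
      · exact le_trans (min_le_left _ _) (hbd m (by omega) h2)
    · rcases le_total μ (Tf x y n (n - (t : ℤ))) with h | h
      · rw [min_eq_left h]
        rcases hat with h' | ⟨m, hm1, hm2, hm3⟩
        · exact Or.inl h'
        · exact Or.inr ⟨m, by rw [hidx2]; omega, hm2, hm3⟩
      · rw [min_eq_right h]
        exact Or.inr ⟨n - (t : ℤ), by rw [hidx2], hkn, rfl⟩
    · rw [List.range_succ, List.map_append, List.foldl_append, hfold]
      simp only [List.map_cons, List.map_nil, List.foldl_cons, List.foldl_nil]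
      rw [hidx2]
      simp only [blockStep, Prod.mk.injEq]
      omega

lemma fold_cols (x y : ℤ → ℕ) {n : ℤ} (hn : -1 ≤ n) :
    ∃ μ : ℤ, μ ≤ 0 ∧
      (∀ m : ℤ, -1 ≤ m → m ≤ n → μ ≤ Tf x y n m) ∧
      (μ = 0 ∨ ∃ m : ℤ, -1 ≤ m ∧ m ≤ n ∧ μ = Tf x y n m) ∧
      (cols x y n).foldl blockStep (0, 0) = ((-μ).toNat, (Asum x y n (-1) - μ).toNat) := by
  obtain ⟨μ, h0, hA, hbd, hat, hf⟩ := fold_aux x y n (n + 2).toNat (by omega)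
  have he : n + 1 - (((n + 2).toNat : ℕ) : ℤ) = -1 := by omega
  simp only [he] at hA hbd hat hf
  exact ⟨μ, h0, hbd, hat, hf⟩

lemma cols_nil (x y : ℤ → ℕ) {N : ℤ} (h : N ≤ -2) : cols x y N = [] := by
  unfold cols
  rw [show (N + 2).toNat = 0 by omega]
  rfl

lemma cols_pad (x y : ℤ → ℕ) {N N' : ℤ} (h2 : -2 ≤ N) (hNN : N ≤ N')
    (hz : ∀ k : ℤ, N < k → x k = 0 ∧ y k = 0) :
    (cols x y N').foldl blockStep (0, 0) = (cols x y N).foldl blockStep (0, 0) := by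
  refine Int.le_induction
    (motive := fun M _ => (cols x y M).foldl blockStep (0, 0) = (cols x y N).foldl blockStep (0, 0))
    ?_ ?_ N' hNN
  · rfl
  intro M hM ih
  have hcons : cols x y (M + 1) = (y (M + 1), x (M + 1)) :: cols x y M := by
    unfold cols
    rw [show ((M + 1) + 2).toNat = (M + 2).toNat + 1 by omega, List.range_succ_eq_map,
      List.map_cons, List.map_map]
    congr 1
    · norm_num
    · apply List.map_congr_left
      intro t _
      simp only [Function.comp_apply]
      congr 2 <;> push_cast <;> ring
  rw [hcons, List.foldl_cons, (hz (M + 1) (by omega)).1, (hz (M + 1) (by omega)).2,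
    show blockStep (0, 0) ((0 : ℕ), (0 : ℕ)) = (0, 0) from rfl, ih]

/-! ### The core invariance -/

lemma core (X : TwoRow) (n : ℤ) (hn : 1 ≤ n)
    (hlow : ∀ k : ℤ, k ≤ -2 → X.1 k = 0 ∧ X.2 k = 0)
    (hhi : ∀ k : ℤ, n - 2 ≤ k → X.1 k = 0 ∧ X.2 k = 0)
    (hred : X.Reduced) :
    (S12.cols (Fop X).1 (Fop X).2 n).foldl blockStep (0, 0) =
      (S12.cols X.1 X.2 n).foldl blockStep (0, 0) := by
  have hz0 : ∀ k : ℤ, n - 2 ≤ k → zS X k = 0 := by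
    intro k hk
    show min (X.1 k) _ = 0
    rw [(hhi k hk).1]
    simp
  have hzlow : ∀ k : ℤ, k ≤ -2 → zS X k = 0 := by
    intro k hk
    show min (X.1 k) _ = 0
    rw [(hlow k hk).1]
    simp
  have hXS0 : ∀ k : ℤ, n - 1 ≤ k → XS X k = 0 := by
    intro k hk
    show X.1 k - zS X k + zS X (k - 1) = 0
    rw [(hhi k (by omega)).1, hz0 k (by omega), hz0 (k - 1) (by omega)]
  have hXSlow : ∀ k : ℤ, k ≤ -2 → XS X k = 0 := by
    intro k hk
    show X.1 k - zS X k + zS X (k - 1) = 0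
    rw [(hlow k hk).1, hzlow k hk, hzlow (k - 1) (by omega)]
  obtain ⟨μ₂, hμ₂0, hbd₂, hat₂, hf₂⟩ := fold_cols X.1 X.2 (show (-1 : ℤ) ≤ n by omega)
  obtain ⟨μ₁, hμ₁0, hbd₁, hat₁, hf₁⟩ := fold_cols (Fop X).1 (Fop X).2 (show (-1 : ℤ) ≤ n by omega)
  have hT0 : ∀ j : ℤ, n ≤ j → Tf X.1 X.2 n j = 0 := by
    intro j hj
    unfold Tf
    rw [Asum_empty _ _ (by omega), (hhi j (by omega)).2]
    simp
  have hAconst : ∀ s : ℕ, Asum X.1 X.2 n (-1 - (s : ℤ)) = Asum X.1 X.2 n (-1) := by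
    intro s
    induction s with
    | zero => simp
    | succ s ih =>
      have h1 : (-1 - ((s + 1 : ℕ) : ℤ)) = (-2 - (s : ℤ)) := by push_cast; ring
      have h2 : ((-2 - (s : ℤ)) + 1) = -1 - (s : ℤ) := by ring
      rw [h1, Asum_rec X.1 X.2 (by omega), h2, ih,
        (hlow (-2 - (s : ℤ)) (by omega)).1, (hlow (-2 - (s : ℤ)) (by omega)).2]
      simp
  have hTall : ∀ j : ℤ, μ₂ ≤ Tf X.1 X.2 n j := by
    intro j
    rcases le_or_gt j (-2) with h | h
    · have h1 : Tf X.1 X.2 n j = Asum X.1 X.2 n (-1) := by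
        unfold Tf
        rw [(hlow j (by omega)).2]
        have hs : (j + 1) = -1 - (((-2 - j).toNat : ℕ) : ℤ) := by omega
        rw [hs, hAconst]
        simp
      have h2 : Asum X.1 X.2 n (-1) =
          ((X.1 (-1) : ℤ) - (X.2 (-1) : ℤ)) + Asum X.1 X.2 n 0 := by
        have := Asum_rec X.1 X.2 (show (-1 : ℤ) ≤ n by omega)
        rw [this]
        norm_num
      have h3 : Tf X.1 X.2 n (-1) = Asum X.1 X.2 n 0 - (X.2 (-1) : ℤ) := by
        unfold Tf
        norm_num
      have h4 := hbd₂ (-1) (le_refl _) (by omega)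
      omega
    · rcases le_or_gt n j with h' | h'
      · rw [hT0 j h']
        exact hμ₂0
      · exact hbd₂ j (by omega) (by omega)
  have hTrec : ∀ m : ℤ, m ≤ n →
      Tf X.1 X.2 n (m - 1) = Tf X.1 X.2 n m + (X.1 m : ℤ) - (X.2 (m - 1) : ℤ) := by
    intro m hm
    unfold Tf
    rw [show m - 1 + 1 = m by ring, Asum_rec X.1 X.2 hm]
    ring
  -- the tail-sum identity for `Fop X`
  have hF2 : ∀ s : ℕ, (s : ℤ) ≤ n + 2 →
      Asum (Fop X).1 (Fop X).2 n (n + 1 - (s : ℤ)) = Asum X.1 X.2 n (n + 1 - (s : ℤ))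
        + 2 * ((XS X (n - (s : ℤ)) / 2 : ℕ) : ℤ) - 2 * ((X.2 (n - (s : ℤ)) / 2 : ℕ) : ℤ) := by
    intro s
    induction s with
    | zero =>
      intro _
      norm_num
      rw [Asum_empty _ _ (by omega), Asum_empty _ _ (by omega),
        hXS0 n (by omega), (hhi n (by omega)).2]
      simp
    | succ s ih =>
      intro hs
      have ihs := ih (by push_cast at hs ⊢; omega)
      have hidx : n + 1 - ((s + 1 : ℕ) : ℤ) = n - (s : ℤ) := by push_cast; ring
      have hidx3 : (n - (s : ℤ)) + 1 = n + 1 - (s : ℤ) := by ring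
      rw [hidx]
      set m : ℤ := n - (s : ℤ) with hm
      have hmn : m ≤ n := by omega
      rw [Asum_rec (Fop X).1 (Fop X).2 hmn, Asum_rec X.1 X.2 hmn, hidx3, ihs]
      have hm1 : n - ((s + 1 : ℕ) : ℤ) = m - 1 := by push_cast; omega
      rw [hm1]
      have ex : (Fop X).1 m = XS X m % 2 + 2 * (XS X (m - 1) / 2) := rfl
      have ey : (Fop X).2 m = X.2 m % 2 + 2 * (X.2 (m - 1) / 2) - zS X m + zS X (m - 1) := rfl
      have e3 : XS X m = X.1 m - zS X m + zS X (m - 1) := rfl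
      have e4 : zS X m ≤ X.1 m := min_le_left _ _
      have e5 : zS X m ≤ X.2 m % 2 + 2 * (X.2 (m - 1) / 2) := min_le_right _ _
      omega
  have hF3 : ∀ m : ℤ, -1 ≤ m → m ≤ n →
      Tf (Fop X).1 (Fop X).2 n m = Tf X.1 X.2 n (m - 1)
        + ((X.2 (m - 1) % 2 : ℕ) : ℤ) - ((XS X m % 2 : ℕ) : ℤ) := by
    intro m h1 h2
    have hidx : n + 1 - (((n - m).toNat : ℕ) : ℤ) = m + 1 := by omega
    have hidx2 : n - (((n - m).toNat : ℕ) : ℤ) = m := by omega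
    have h2' := hF2 (n - m).toNat (by omega)
    rw [hidx, hidx2] at h2'
    have hTm1 : Tf X.1 X.2 n (m - 1) = Asum X.1 X.2 n m - (X.2 (m - 1) : ℤ) := by
      unfold Tf
      rw [show m - 1 + 1 = m by ring]
    have hArec := Asum_rec X.1 X.2 h2
    have hTdef : Tf (Fop X).1 (Fop X).2 n m =
        Asum (Fop X).1 (Fop X).2 n (m + 1) - ((Fop X).2 m : ℤ) := rfl
    have ey : (Fop X).2 m = X.2 m % 2 + 2 * (X.2 (m - 1) / 2) - zS X m + zS X (m - 1) := rfl
    have e3 : XS X m = X.1 m - zS X m + zS X (m - 1) := rfl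
    have e4 : zS X m ≤ X.1 m := min_le_left _ _
    have e5 : zS X m ≤ X.2 m % 2 + 2 * (X.2 (m - 1) / 2) := min_le_right _ _
    omega
  have hA : Asum (Fop X).1 (Fop X).2 n (-1) = Asum X.1 X.2 n (-1) := by
    have h1 := hF2 (n + 2).toNat (by omega)
    have hidx : n + 1 - (((n + 2).toNat : ℕ) : ℤ) = -1 := by omega
    have hidx2 : n - (((n + 2).toNat : ℕ) : ℤ) = -2 := by omega
    rw [hidx, hidx2, hXSlow (-2) (by omega), (hlow (-2) (by omega)).2] at h1
    rw [h1]
    simp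
  -- μ₂ ≤ μ₁
  have hge : μ₂ ≤ μ₁ := by
    rcases hat₁ with h | ⟨m, hm1, hm2, hm3⟩
    · omega
    · rw [hm3, hF3 m hm1 hm2]
      by_cases hpar : X.2 (m - 1) % 2 = 0 ∧ XS X m % 2 = 1
      · by_contra hcon
        push_neg at hcon
        have hTm1 : Tf X.1 X.2 n (m - 1) = μ₂ := by
          have := hTall (m - 1)
          omega
        have hTm := hTall m
        have hrec1 := hTrec m hm2
        have hT2 := hTall (m - 2)
        have hrec2 := hTrec (m - 1) (by omega)
        rw [show m - 1 - 1 = m - 2 by ring] at hrec2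
        have hr1 := hred (m - 1)
        rw [show m - 1 + 1 = m by ring] at hr1
        have hr2 := hred (m - 2)
        rw [show m - 2 + 1 = m - 1 by ring] at hr2
        have ezm : zS X m = min (X.1 m) (X.2 m % 2 + 2 * (X.2 (m - 1) / 2)) := rfl
        have ezm1 : zS X (m - 1) = min (X.1 (m - 1)) (X.2 (m - 1) % 2 + 2 * (X.2 (m - 2) / 2)) := by
          unfold zS rH qH
          rw [show m - 1 - 1 = m - 2 by ring]
        have eXS : XS X m = X.1 m - zS X m + zS X (m - 1) := rfl
        omega
      · have := hTall (m - 1)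
        omega
  -- μ₁ ≤ μ₂
  have hle : μ₁ ≤ μ₂ := by
    by_cases hz : μ₂ = 0
    · omega
    · have hμ₂neg : μ₂ < 0 := by omega
      rcases hat₂ with h | ⟨m', hm'1, hm'2, hm'3⟩
      · omega
      obtain ⟨m0, ⟨hm01, hm02, hm03⟩, hmax⟩ :
          ∃ m0 : ℤ, (-1 ≤ m0 ∧ m0 ≤ n ∧ Tf X.1 X.2 n m0 = μ₂) ∧
            ∀ b : ℤ, -1 ≤ b → b ≤ n → Tf X.1 X.2 n b = μ₂ → b ≤ m0 := by
        set SSet : Finset ℤ :=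
          (Finset.Icc (-1 : ℤ) n).filter (fun m => Tf X.1 X.2 n m = μ₂) with hS
        have hSne : SSet.Nonempty := by
          refine ⟨m', Finset.mem_filter.mpr ⟨Finset.mem_Icc.mpr ⟨hm'1, hm'2⟩, hm'3.symm⟩⟩
        refine ⟨SSet.max' hSne, ?_, ?_⟩
        · have h := Finset.mem_filter.mp (SSet.max'_mem hSne)
          have h1 := Finset.mem_Icc.mp h.1
          exact ⟨h1.1, h1.2, h.2⟩
        · intro b hb1 hb2 hb3
          exact SSet.le_max' b (Finset.mem_filter.mpr ⟨Finset.mem_Icc.mpr ⟨hb1, hb2⟩, hb3⟩)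
      have hm0n : m0 ≠ n := by
        intro h
        rw [h, hT0 n (le_refl _)] at hm03
        omega
      have hnext : μ₂ + 1 ≤ Tf X.1 X.2 n (m0 + 1) := by
        have h1 := hTall (m0 + 1)
        by_contra hcon
        have heq : Tf X.1 X.2 n (m0 + 1) = μ₂ := by omega
        rcases le_or_gt (m0 + 1) n with hle' | hlt'
        · have := hmax (m0 + 1) (by omega) hle' heq
          omega
        · rw [hT0 (m0 + 1) (by omega)] at heq
          omega
      have hrecn := hTrec (m0 + 1) (by omega)
      rw [show m0 + 1 - 1 = m0 by ring] at hrecn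
      have hr0 := hred m0
      have hprev := hTall (m0 - 1)
      have hrecp := hTrec m0 (by omega)
      have hrm1 := hred (m0 - 1)
      rw [show m0 - 1 + 1 = m0 by ring] at hrm1
      by_cases hpar : X.2 m0 % 2 = 1 ∧ XS X (m0 + 1) % 2 = 0
      · have ezm0 : zS X m0 = min (X.1 m0) (X.2 m0 % 2 + 2 * (X.2 (m0 - 1) / 2)) := rfl
        have ezm0p : zS X (m0 + 1) =
            min (X.1 (m0 + 1)) (X.2 (m0 + 1) % 2 + 2 * (X.2 m0 / 2)) := by
          unfold zS rH qH
          rw [show m0 + 1 - 1 = m0 by ring]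
        have eXSp : XS X (m0 + 1) = X.1 (m0 + 1) - zS X (m0 + 1) + zS X m0 := by
          unfold XS
          rw [show m0 + 1 - 1 = m0 by ring]
        have hx0 : X.1 m0 = 0 ∧ X.2 (m0 - 1) = 0 := by omega
        have hwit := hbd₁ m0 hm01 hm02
        rw [hF3 m0 hm01 hm02] at hwit
        omega
      · have hwit := hbd₁ (m0 + 1) (by omega) (by omega)
        rw [hF3 (m0 + 1) (by omega) (by omega)] at hwit
        rw [show m0 + 1 - 1 = m0 by ring] at hwit
        omega
  have hμ : μ₁ = μ₂ := le_antisymm hle hge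
  rw [hf₁, hf₂, hA, hμ]

end S12

/-- If `X` is a reduced two-rowed array, then the reduced signatures (as `±`-sequences,
i.e. forgetting the annotations) of `X` and of `F(X)` coincide: `σ̄(F(X)) = σ̄(X)`. -/
theorem statement12 (X : TwoRow) (hX : X.Supported) (hred : X.Reduced) :
    (redSig (Fop X)).map Prod.fst = (redSig X).map Prod.fst := by
  classical
  obtain ⟨hlow, hexX⟩ := hX
  have hzN : ∀ N : ℤ, (∀ k : ℤ, N ≤ k → X.1 k = 0 ∧ X.2 k = 0) →
      ∀ i : ℤ, N ≤ i → zS X i = 0 := by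
    intro N hN i hi
    show min (X.1 i) _ = 0
    rw [(hN i hi).1]
    simp
  have hexF : ∃ N' : ℤ, ∀ k : ℤ, N' ≤ k → (Fop X).1 k = 0 ∧ (Fop X).2 k = 0 := by
    obtain ⟨N, hN⟩ := hexX
    have hXS : ∀ j : ℤ, N + 1 ≤ j → XS X j = 0 := by
      intro j hj
      show X.1 j - zS X j + zS X (j - 1) = 0
      rw [(hN j (by omega)).1, hzN N hN j (by omega), hzN N hN (j - 1) (by omega)]
    refine ⟨N + 2, fun k hk => ⟨?_, ?_⟩⟩
    · show rH (XS X k) + 2 * qH (XS X (k - 1)) = 0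
      rw [hXS k (by omega), hXS (k - 1) (by omega)]
      rfl
    · show rH (X.2 k) + 2 * qH (X.2 (k - 1)) - zS X k + zS X (k - 1) = 0
      rw [(hN k (by omega)).2, (hN (k - 1) (by omega)).2,
        hzN N hN k (by omega), hzN N hN (k - 1) (by omega)]
      rfl
  have hsX : sigOf X = sigFrom X hexX.choose := by
    rw [sigOf, dif_pos hexX]
  have hsF : sigOf (Fop X) = sigFrom (Fop X) hexF.choose := by
    rw [sigOf, dif_pos hexF]
  set Nx : ℤ := hexX.choose with hNx
  set Nf : ℤ := hexF.choose with hNf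
  have hspecX := hexX.choose_spec
  have hspecF := hexF.choose_spec
  set n : ℤ := max (max Nx Nf) 1 + 3 with hn
  -- fold for X at its own N equals fold at n
  have hfoldX : (S12.cols X.1 X.2 Nx).foldl S12.blockStep (0, 0) =
      (S12.cols X.1 X.2 n).foldl S12.blockStep (0, 0) := by
    have hstep : (S12.cols X.1 X.2 (max Nx (-2))).foldl S12.blockStep (0, 0) =
        (S12.cols X.1 X.2 Nx).foldl S12.blockStep (0, 0) := by
      rcases le_or_gt Nx (-2) with h | h
      · rw [S12.cols_nil X.1 X.2 h, S12.cols_nil X.1 X.2 (le_of_eq (max_eq_right h))]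
      · rw [max_eq_left (by omega)]
    rw [← hstep]
    exact (S12.cols_pad X.1 X.2 (le_max_right _ _) (by omega)
      (fun k hk => hspecX k (by omega))).symm
  have hfoldF : (S12.cols (Fop X).1 (Fop X).2 Nf).foldl S12.blockStep (0, 0) =
      (S12.cols (Fop X).1 (Fop X).2 n).foldl S12.blockStep (0, 0) := by
    have hstep : (S12.cols (Fop X).1 (Fop X).2 (max Nf (-2))).foldl S12.blockStep (0, 0) =
        (S12.cols (Fop X).1 (Fop X).2 Nf).foldl S12.blockStep (0, 0) := by
      rcases le_or_gt Nf (-2) with h | h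
      · rw [S12.cols_nil _ _ h, S12.cols_nil _ _ (le_of_eq (max_eq_right h))]
      · rw [max_eq_left (by omega)]
    rw [← hstep]
    exact (S12.cols_pad (Fop X).1 (Fop X).2 (le_max_right _ _) (by omega)
      (fun k hk => hspecF k (by omega))).symm
  have hcore := S12.core X n (by omega) hlow
    (fun k hk => hspecX k (by omega)) hred
  rw [redSig, redSig, hsX, hsF, S12.reduceSig_mapfst, S12.reduceSig_mapfst,
    S12.sig_fold, S12.sig_fold, hfoldX, hfoldF, hcore]
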